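/- Let f : ℝ^d → ℝ be twice continuously differentiable with ∇²f(w) ⪯ L·I for all w (0 < L < ∞). Fix w ∈ ℝ^d and a symmetric d×d matrix H̃ with H̃ ⪰ μ̃·I (μ̃ > 0). Let g be an integrable ℝ^d-valued random vector with E[g] = ∇f(w), let 0 < α ≤ μ̃/L, and set w₊ = w − α H̃⁻¹ g and δ = g − ∇f(w). Then E[f(w₊)] ≤ f(w) − α(1 − Lα/(2μ̃))·∇f(w)ᵀ H̃⁻¹ ∇f(w) + (Lα²/(2μ̃))·E[δᵀ H̃⁻¹ δ]. -/

import Mathlib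

open Finset Matrix MeasureTheory
open scoped RealInnerProductSpace

noncomputable section

abbrev Vec (d : ℕ) := EuclideanSpace ℝ (Fin d)

/-- The continuous linear operator on Euclidean space associated with a matrix. -/
noncomputable def toOp {d : ℕ} (A : Matrix (Fin d) (Fin d) ℝ) : Vec d →L[ℝ] Vec d :=
  LinearMap.toContinuousLinearMap (Matrix.toEuclideanLin A)

/-- Descent lemma from a Hessian upper bound. -/
lemma descent_aux {d : ℕ} (L : ℝ)
    (f : Vec d → ℝ) (gradf : Vec d → Vec d) (Hf : Vec d → (Vec d →L[ℝ] Vec d))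
    (hgrad : ∀ x, HasGradientAt f (gradf x) x)
    (hHf : ∀ x, HasFDerivAt gradf (Hf x) x)
    (hHub : ∀ x (v : Vec d), ⟪Hf x v, v⟫ ≤ L * ‖v‖ ^ 2)
    (x v : Vec d) :
    f (x + v) ≤ f x + ⟪gradf x, v⟫ + L / 2 * ‖v‖ ^ 2 := by
  set c : ℝ → Vec d := fun t => x + t • v with hc_def
  have hc : ∀ t : ℝ, HasDerivAt c v t := by
    intro t
    have := ((hasDerivAt_id t).smul_const v).const_add x
    rw [one_smul] at this
    exact this
  set ψ : ℝ → ℝ := fun t => ⟪gradf (c t), v⟫ with hψ_def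
  have hψ : ∀ t : ℝ, HasDerivAt ψ (⟪Hf (c t) v, v⟫) t := by
    intro t
    have hG : HasDerivAt (fun t => gradf (c t)) (Hf (c t) v) t :=
      (hHf (c t)).comp_hasDerivAt t (hc t)
    have := (HasDerivAt.inner ℝ hG (hasDerivAt_const t v))
    simpa using this
  set φ : ℝ → ℝ := fun t => f (c t) with hφ_def
  have hφ : ∀ t : ℝ, HasDerivAt φ (ψ t) t := by
    intro t
    have hF := (hasGradientAt_iff_hasFDerivAt.mp (hgrad (c t)))
    have := hF.comp_hasDerivAt t (hc t)
    simp only [InnerProductSpace.toDual_apply_apply] at this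
    exact this
  set η : ℝ → ℝ := fun t => L * ‖v‖ ^ 2 * t - ψ t with hη_def
  have hη : ∀ t : ℝ, HasDerivAt η (L * ‖v‖ ^ 2 - ⟪Hf (c t) v, v⟫) t := by
    intro t
    have := ((hasDerivAt_id t).const_mul (L * ‖v‖ ^ 2)).sub (hψ t)
    simp only [id, mul_one] at this
    exact this
  have hηmono : Monotone η := by
    apply monotone_of_deriv_nonneg
    · exact fun t => (hη t).differentiableAt
    · intro t
      rw [(hη t).deriv]
      have := hHub (c t) v
      linarith
  have hψle : ∀ t : ℝ, 0 ≤ t → ψ t ≤ ψ 0 + L * ‖v‖ ^ 2 * t := by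
    intro t ht
    have := hηmono ht
    simp only [hη_def, mul_zero] at this
    linarith
  set χ : ℝ → ℝ := fun t => f x + t * ψ 0 + L / 2 * ‖v‖ ^ 2 * t ^ 2 - φ t with hχ_def
  have hχ : ∀ t : ℝ, HasDerivAt χ (ψ 0 + L * ‖v‖ ^ 2 * t - ψ t) t := by
    intro t
    have h1 : HasDerivAt (fun t : ℝ => f x + t * ψ 0 + L / 2 * ‖v‖ ^ 2 * t ^ 2)
        (ψ 0 + L / 2 * ‖v‖ ^ 2 * (2 * t)) t := by
      have ha : HasDerivAt (fun t : ℝ => t * ψ 0) (ψ 0) t := by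
        simpa using (hasDerivAt_id t).mul_const (ψ 0)
      have hb : HasDerivAt (fun t : ℝ => t ^ 2) (2 * t) t := by
        simpa using hasDerivAt_pow 2 t
      exact (ha.const_add (f x)).add (hb.const_mul (L / 2 * ‖v‖ ^ 2))
    have := h1.sub (hφ t)
    refine this.congr_deriv ?_
    ring
  have hχmono : MonotoneOn χ (Set.Ici (0:ℝ)) := by
    apply monotoneOn_of_deriv_nonneg (convex_Ici 0)
    · exact fun t _ => (hχ t).differentiableAt.continuousAt.continuousWithinAt
    · exact fun t _ => ((hχ t).differentiableAt).differentiableWithinAt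
    · intro t ht
      rw [interior_Ici] at ht
      rw [(hχ t).deriv]
      have := hψle t (le_of_lt ht)
      linarith
  have h01 := hχmono (Set.self_mem_Ici) (Set.mem_Ici.mpr zero_le_one) zero_le_one
  have hc0 : c 0 = x := by simp [hc_def]
  have hc1 : c 1 = x + v := by simp [hc_def]
  simp only [hχ_def, hφ_def, hψ_def, hc0, hc1] at h01
  norm_num at h01
  have hinner : (⟪gradf x, v⟫ : ℝ) = ∑ i, gradf x i * v i := by
    simp [PiLp.inner_apply, RCLike.inner_apply, mul_comm]
  linarith

lemma inner_eq_dot {d : ℕ} (x y : Vec d) :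
    ⟪x, y⟫ = (WithLp.equiv 2 (Fin d → ℝ)) x ⬝ᵥ (WithLp.equiv 2 (Fin d → ℝ)) y := by
  simp [PiLp.inner_apply, RCLike.inner_apply, dotProduct, mul_comm]

lemma toOp_symm {d : ℕ} (A : Matrix (Fin d) (Fin d) ℝ) (hA : A.IsSymm) (u y : Vec d) :
    ⟪toOp A u, y⟫ = ⟪u, toOp A y⟫ := by
  simp only [toOp, LinearMap.coe_toContinuousLinearMap', Matrix.toEuclideanLin_apply,
    inner_eq_dot, Equiv.apply_symm_apply, WithLp.equiv_apply, WithLp.ofLp_toLp]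
  rw [dotProduct_comm, Matrix.dotProduct_mulVec, ← Matrix.mulVec_transpose, hA,
    dotProduct_comm]

lemma toOp_inv {d : ℕ} (μt : ℝ) (hμt : 0 < μt) (Ht : Matrix (Fin d) (Fin d) ℝ)
    (hHtlb : ∀ v : Vec d, μt * ‖v‖ ^ 2 ≤ ⟪toOp Ht v, v⟫) (u : Vec d) :
    toOp Ht⁻¹ (toOp Ht u) = u ∧ toOp Ht (toOp Ht⁻¹ u) = u := by
  have hker : ∀ v : Fin d → ℝ, Ht *ᵥ v = 0 → v = 0 := by
    intro v hv
    set x : Vec d := (WithLp.equiv 2 (Fin d → ℝ)).symm v with hx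
    have h2 := hHtlb x
    rw [toOp] at h2
    simp only [LinearMap.coe_toContinuousLinearMap', Matrix.toEuclideanLin_apply,
      hx, Equiv.apply_symm_apply, hv, WithLp.equiv_symm_apply, WithLp.ofLp_toLp] at h2
    have hx0 : x = 0 := by
      have hnn : (0:ℝ) ≤ ‖x‖ ^ 2 := sq_nonneg _
      have : ⟪((WithLp.equiv 2 (Fin d → ℝ)).symm (0 : Fin d → ℝ) : Vec d), x⟫ = 0 := by
        simp [inner_eq_dot]
      change μt * ‖x‖ ^ 2 ≤ ⟪(WithLp.equiv 2 (Fin d → ℝ)).symm 0, x⟫ at h2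
      rw [this] at h2
      have : ‖x‖ ^ 2 ≤ 0 := by nlinarith
      have : ‖x‖ = 0 := by nlinarith [norm_nonneg x]
      simpa using this
    have : v = (WithLp.equiv 2 (Fin d → ℝ)) x := by simp [hx]
    rw [this, hx0]; simp
  have hinj : Function.Injective (Ht.mulVec) := by
    intro a b hab
    have h3 : Ht *ᵥ (a - b) = 0 := by
      rw [Matrix.mulVec_sub, hab, sub_self]
    have := hker _ h3
    exact sub_eq_zero.mp this
  have hdet : IsUnit Ht.det :=
    (Matrix.isUnit_iff_isUnit_det Ht).mp (Matrix.mulVec_injective_iff_isUnit.mp hinj)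
  constructor
  · rw [toOp, toOp]
    simp only [LinearMap.coe_toContinuousLinearMap', Matrix.toEuclideanLin_apply,
      Equiv.apply_symm_apply, Matrix.mulVec_mulVec, Matrix.nonsing_inv_mul _ hdet,
      Matrix.one_mulVec, Equiv.symm_apply_apply]
  · rw [toOp, toOp]
    simp only [LinearMap.coe_toContinuousLinearMap', Matrix.toEuclideanLin_apply,
      Equiv.apply_symm_apply, Matrix.mulVec_mulVec, Matrix.mul_nonsing_inv _ hdet,
      Matrix.one_mulVec, Equiv.symm_apply_apply]

/-- One-step expected descent bound for an unbiased stochastic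
gradient in an inexact Newton-type step. -/
theorem expected_descent_lemma_unbiased_gradient {d : ℕ}
    {Ω : Type*} [MeasurableSpace Ω] (μP : Measure Ω) [IsProbabilityMeasure μP]
    (L μt α : ℝ) (hL : 0 < L) (hμt : 0 < μt) (hα0 : 0 < α) (hα : α ≤ μt / L)
    (f : Vec d → ℝ) (gradf : Vec d → Vec d) (Hf : Vec d → (Vec d →L[ℝ] Vec d))
    (hsmooth : ContDiff ℝ 2 f)
    (hgrad : ∀ x, HasGradientAt f (gradf x) x)
    (hHf : ∀ x, HasFDerivAt gradf (Hf x) x)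
    (hHub : ∀ x (v : Vec d), ⟪Hf x v, v⟫ ≤ L * ‖v‖ ^ 2)
    (w : Vec d)
    (Ht : Matrix (Fin d) (Fin d) ℝ) (hHtsym : Ht.IsSymm)
    (hHtlb : ∀ v : Vec d, μt * ‖v‖ ^ 2 ≤ ⟪toOp Ht v, v⟫)
    (g : Ω → Vec d) (hgint : Integrable g μP)
    (hmean : ∫ ω, g ω ∂μP = gradf w)
    (hfint : Integrable (fun ω => f (w - α • toOp Ht⁻¹ (g ω))) μP)
    (hqint : Integrable
      (fun ω => ⟪toOp Ht⁻¹ (g ω - gradf w), g ω - gradf w⟫) μP) :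
    ∫ ω, f (w - α • toOp Ht⁻¹ (g ω)) ∂μP ≤
      f w - α * (1 - L * α / (2 * μt)) * ⟪toOp Ht⁻¹ (gradf w), gradf w⟫
      + L * α ^ 2 / (2 * μt) *
        ∫ ω, ⟪toOp Ht⁻¹ (g ω - gradf w), g ω - gradf w⟫ ∂μP := by
  set B : Vec d →L[ℝ] Vec d := toOp Ht⁻¹ with hB_def
  set G : Vec d := gradf w with hG_def
  have hAB := fun u => toOp_inv μt hμt Ht hHtlb u
  have hBsymm : (Ht⁻¹).IsSymm := by
    unfold Matrix.IsSymm
    rw [Matrix.transpose_nonsing_inv, hHtsym.eq]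
  have hBsy : ∀ u y : Vec d, ⟪B u, y⟫ = ⟪u, B y⟫ := fun u y => toOp_symm _ hBsymm u y
  have hBlow : ∀ u : Vec d, μt * ‖B u‖ ^ 2 ≤ ⟪B u, u⟫ := by
    intro u
    have h := hHtlb (B u)
    rw [(hAB u).2] at h
    rwa [real_inner_comm] at h
  have hBnn : ∀ u : Vec d, 0 ≤ ⟪B u, u⟫ := by
    intro u
    have := hBlow u
    nlinarith [sq_nonneg ‖B u‖]
  -- pointwise bound
  have hpt : ∀ q : Vec d, f (w - α • B q) ≤
      f w - α * ⟪G, B q⟫ + L * α ^ 2 / (2 * μt) * ⟪B q, q⟫ := by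
    intro q
    have h1 := descent_aux L f gradf Hf hgrad hHf hHub w (-(α • B q))
    have he : w + -(α • B q) = w - α • B q := by abel
    rw [he] at h1
    have he2 : (⟪gradf w, -(α • B q)⟫ : ℝ) = -(α * ⟪G, B q⟫) := by
      rw [inner_neg_right, real_inner_smul_right, hG_def]
    have he3 : ‖-(α • B q)‖ ^ 2 = α ^ 2 * ‖B q‖ ^ 2 := by
      rw [norm_neg, norm_smul, mul_pow, Real.norm_eq_abs, sq_abs]
    rw [he2, he3] at h1
    have hsq : ‖B q‖ ^ 2 ≤ (1 / μt) * ⟪B q, q⟫ := by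
      have := hBlow q
      rw [div_mul_eq_mul_div, le_div_iff₀ hμt]
      linarith
    have hLa : 0 ≤ L / 2 * α ^ 2 := by positivity
    have : L / 2 * (α ^ 2 * ‖B q‖ ^ 2) ≤ L * α ^ 2 / (2 * μt) * ⟪B q, q⟫ := by
      have h2 := mul_le_mul_of_nonneg_left hsq hLa
      calc L / 2 * (α ^ 2 * ‖B q‖ ^ 2) = L / 2 * α ^ 2 * ‖B q‖ ^ 2 := by ring
        _ ≤ L / 2 * α ^ 2 * ((1 / μt) * ⟪B q, q⟫) := h2
        _ = L * α ^ 2 / (2 * μt) * ⟪B q, q⟫ := by field_simp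
    linarith
  -- quadratic expansion identity
  have key : ∀ q : Vec d, (⟪B q, q⟫ : ℝ) =
      ⟪B (q - G), q - G⟫ + 2 * ⟪B G, q⟫ - ⟪B G, G⟫ := by
    intro q
    have e1 : B (q - G) = B q - B G := map_sub _ _ _
    rw [e1, inner_sub_left, inner_sub_right, inner_sub_right]
    have e2 : (⟪B q, G⟫ : ℝ) = ⟪B G, q⟫ := by rw [hBsy, real_inner_comm]
    linarith
  -- integrability
  have hBg : Integrable (fun ω => B (g ω)) μP := B.integrable_comp hgint
  have hint1 : Integrable (fun ω => (⟪G, B (g ω)⟫ : ℝ)) μP := hBg.const_inner G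
  have hint2list : Integrable (fun ω => (⟪B G, g ω⟫ : ℝ)) μP := hgint.const_inner (B G)
  have hfun2 : (fun ω => (⟪B (g ω), g ω⟫ : ℝ)) =
      fun ω => ⟪B (g ω - G), g ω - G⟫ + 2 * ⟪B G, g ω⟫ - ⟪B G, G⟫ :=
    funext fun ω => key (g ω)
  have hint2 : Integrable (fun ω => (⟪B (g ω), g ω⟫ : ℝ)) μP := by
    rw [hfun2]
    exact (hqint.add (hint2list.const_mul 2)).sub (integrable_const _)
  have hrint : Integrable (fun ω =>
      f w - α * ⟪G, B (g ω)⟫ + L * α ^ 2 / (2 * μt) * ⟪B (g ω), g ω⟫) μP :=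
    ((integrable_const (f w)).sub (hint1.const_mul α)).add
      (hint2.const_mul (L * α ^ 2 / (2 * μt)))
  -- integral identities
  have hI1 : ∫ ω, (⟪G, B (g ω)⟫ : ℝ) ∂μP = ⟪G, B G⟫ := by
    rw [integral_inner hBg G, ContinuousLinearMap.integral_comp_comm B hgint, hmean]
  have haux1 : Integrable (fun ω => (⟪B (g ω - G), g ω - G⟫ : ℝ) + 2 * ⟪B G, g ω⟫) μP :=
    hqint.add (hint2list.const_mul 2)
  have hI2 : ∫ ω, (⟪B (g ω), g ω⟫ : ℝ) ∂μP =
      (∫ ω, (⟪B (g ω - G), g ω - G⟫ : ℝ) ∂μP) + ⟪B G, G⟫ := by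
    rw [hfun2]
    rw [integral_sub haux1 (integrable_const _),
      integral_add hqint (hint2list.const_mul 2), integral_const_mul _ _,
      integral_inner hgint (B G), hmean, integral_const]
    simp [measure_univ]
    ring
  -- main chain
  calc ∫ ω, f (w - α • B (g ω)) ∂μP
      ≤ ∫ ω, (f w - α * ⟪G, B (g ω)⟫ + L * α ^ 2 / (2 * μt) * ⟪B (g ω), g ω⟫) ∂μP := by
        apply integral_mono hfint hrint
        intro ω
        exact hpt (g ω)
    _ = f w - α * ⟪G, B G⟫ + L * α ^ 2 / (2 * μt) *
        ((∫ ω, (⟪B (g ω - G), g ω - G⟫ : ℝ) ∂μP) + ⟪B G, G⟫) := by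
        have haux2 : Integrable (fun ω => f w - α * (⟪G, B (g ω)⟫ : ℝ)) μP :=
          (integrable_const (f w)).sub (hint1.const_mul α)
        have haux3 : Integrable (fun ω => (α * (⟪G, B (g ω)⟫ : ℝ))) μP :=
          hint1.const_mul α
        rw [integral_add haux2 (hint2.const_mul (L * α ^ 2 / (2 * μt))),
          integral_sub (integrable_const (f w)) haux3,
          integral_const_mul _ _, integral_const_mul _ _, hI1, hI2, integral_const]
        simp [measure_univ]
    _ = f w - α * (1 - L * α / (2 * μt)) * ⟪B G, G⟫
        + L * α ^ 2 / (2 * μt) * ∫ ω, (⟪B (g ω - G), g ω - G⟫ : ℝ) ∂μP := by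
        rw [real_inner_comm G (B G)]
        field_simp
        ring
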